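/- Let A be a symmetric positive-definite n×n matrix and B a symmetric n×n matrix. Then lim_{ε→0} dist²(A + εB, A)/ε² = Tr[(A^{-1}B)²], where dist(X,Y) = ‖log(X^{-1/2} Y X^{-1/2})‖_HS (the limit is taken over ε small enough that A + εB is positive-definite). -/

import Mathlib

open Matrix Real

noncomputable def matFun {n : ℕ} (f : ℝ → ℝ) (A : Matrix (Fin n) (Fin n) ℝ) :
    Matrix (Fin n) (Fin n) ℝ :=
  if hA : A.IsHermitian then
    (hA.eigenvectorUnitary : Matrix (Fin n) (Fin n) ℝ) *
      Matrix.diagonal (fun i => f (hA.eigenvalues i)) *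
      (star (hA.eigenvectorUnitary : Matrix (Fin n) (Fin n) ℝ))
  else 0

/-- The logarithm of a positive-definite matrix, defined spectrally. -/
noncomputable def matLog {n : ℕ} (A : Matrix (Fin n) (Fin n) ℝ) :
    Matrix (Fin n) (Fin n) ℝ := matFun Real.log A

/-- The positive square root of a positive-definite matrix, defined spectrally. -/
noncomputable def matSqrt {n : ℕ} (A : Matrix (Fin n) (Fin n) ℝ) :
    Matrix (Fin n) (Fin n) ℝ := matFun Real.sqrt A

/-- `A^{-1/2}` for a positive-definite matrix, defined spectrally. -/
noncomputable def matSqrtInv {n : ℕ} (A : Matrix (Fin n) (Fin n) ℝ) :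
    Matrix (Fin n) (Fin n) ℝ := matFun (fun t => (Real.sqrt t)⁻¹) A

/-- The Hilbert–Schmidt (Frobenius) norm of a real square matrix. -/
noncomputable def hsNorm {n : ℕ} (T : Matrix (Fin n) (Fin n) ℝ) : ℝ :=
  Real.sqrt ((Tᵀ * T).trace)

/-- `dist(A,B) = ‖log (A^{-1/2} B A^{-1/2})‖_HS`. -/
noncomputable def pdist {n : ℕ} (A B : Matrix (Fin n) (Fin n) ℝ) : ℝ :=
  hsNorm (matLog (matSqrtInv A * B * matSqrtInv A))

section Aux

open Polynomial Filter

variable {n : ℕ}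

lemma isHermitian_of_symm' {A : Matrix (Fin n) (Fin n) ℝ} (h : Aᵀ = A) : A.IsHermitian := by
  rwa [Matrix.IsHermitian, Matrix.conjTranspose_eq_transpose_of_trivial]

lemma star_mul_self_eigen {A : Matrix (Fin n) (Fin n) ℝ} (hA : A.IsHermitian) :
    (star (hA.eigenvectorUnitary : Matrix (Fin n) (Fin n) ℝ)) *
    (hA.eigenvectorUnitary : Matrix (Fin n) (Fin n) ℝ) = 1 :=
  Matrix.mem_unitaryGroup_iff'.mp hA.eigenvectorUnitary.2

lemma mul_star_self_eigen {A : Matrix (Fin n) (Fin n) ℝ} (hA : A.IsHermitian) :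
    (hA.eigenvectorUnitary : Matrix (Fin n) (Fin n) ℝ) *
    (star (hA.eigenvectorUnitary : Matrix (Fin n) (Fin n) ℝ)) = 1 :=
  Matrix.mem_unitaryGroup_iff.mp hA.eigenvectorUnitary.2

lemma spectral' {A : Matrix (Fin n) (Fin n) ℝ} (hA : A.IsHermitian) :
    A = (hA.eigenvectorUnitary : Matrix (Fin n) (Fin n) ℝ) *
      Matrix.diagonal (fun i => hA.eigenvalues i) *
      (star (hA.eigenvectorUnitary : Matrix (Fin n) (Fin n) ℝ)) := by
  simpa using hA.spectral_theorem

lemma matFun_def {A : Matrix (Fin n) (Fin n) ℝ} (hA : A.IsHermitian) (f : ℝ → ℝ) :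
    matFun f A = (hA.eigenvectorUnitary : Matrix (Fin n) (Fin n) ℝ) *
      Matrix.diagonal (fun i => f (hA.eigenvalues i)) *
      (star (hA.eigenvectorUnitary : Matrix (Fin n) (Fin n) ℝ)) := dif_pos hA

lemma matFun_transpose {A : Matrix (Fin n) (Fin n) ℝ} (hA : A.IsHermitian) (f : ℝ → ℝ) :
    (matFun f A)ᵀ = matFun f A := by
  rw [matFun_def hA f]
  rw [show (star (hA.eigenvectorUnitary : Matrix (Fin n) (Fin n) ℝ)) =
    (hA.eigenvectorUnitary : Matrix (Fin n) (Fin n) ℝ)ᵀ from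
      (Matrix.conjTranspose_eq_transpose_of_trivial _)]
  simp [Matrix.transpose_mul, Matrix.diagonal_transpose, Matrix.mul_assoc]

lemma matFun_mul {A : Matrix (Fin n) (Fin n) ℝ} (hA : A.IsHermitian) (f g : ℝ → ℝ) :
    matFun f A * matFun g A = matFun (fun t => f t * g t) A := by
  rw [matFun_def hA f, matFun_def hA g, matFun_def hA]
  simp only [Matrix.mul_assoc]
  rw [← Matrix.mul_assoc (star (hA.eigenvectorUnitary : Matrix (Fin n) (Fin n) ℝ)),
    star_mul_self_eigen hA, Matrix.one_mul, ← Matrix.mul_assoc (Matrix.diagonal _),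
    Matrix.diagonal_mul_diagonal]

lemma matFun_eq_one {A : Matrix (Fin n) (Fin n) ℝ} (hA : A.IsHermitian) {f : ℝ → ℝ}
    (hf : ∀ i, f (hA.eigenvalues i) = 1) : matFun f A = 1 := by
  rw [matFun_def hA f]
  simp only [hf]
  simp only [Matrix.diagonal_one]
  simpa using mul_star_self_eigen hA

lemma matFun_eq_self {A : Matrix (Fin n) (Fin n) ℝ} (hA : A.IsHermitian) {f : ℝ → ℝ}
    (hf : ∀ i, f (hA.eigenvalues i) = hA.eigenvalues i) : matFun f A = A := by
  rw [matFun_def hA f]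
  simp only [hf]
  exact (spectral' hA).symm

lemma conj_pow' {N W Wi : Matrix (Fin n) (Fin n) ℝ} (h1 : W * Wi = 1) (h2 : Wi * W = 1)
    (k : ℕ) : (W * N * Wi) ^ k = W * N ^ k * Wi := by
  induction k with
  | zero => simpa using h1.symm
  | succ m ih =>
      rw [pow_succ, ih, pow_succ]
      have e : W * N ^ m * Wi * (W * N * Wi) = W * N ^ m * ((Wi * W) * (N * Wi)) := by
        simp only [Matrix.mul_assoc]
      rw [e, h2, Matrix.one_mul, ← Matrix.mul_assoc, ← Matrix.mul_assoc]

lemma aeval_conj {N W Wi : Matrix (Fin n) (Fin n) ℝ} (h1 : W * Wi = 1) (h2 : Wi * W = 1)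
    (p : ℝ[X]) : Polynomial.aeval (W * N * Wi) p = W * (Polynomial.aeval N p) * Wi := by
  induction p using Polynomial.induction_on' with
  | add p q hp hq =>
      simp [map_add, hp, hq, Matrix.mul_add, Matrix.add_mul]
  | monomial k a =>
      simp only [Polynomial.aeval_monomial, conj_pow' h1 h2, Algebra.algebraMap_eq_smul_one,
        smul_mul_assoc, Matrix.one_mul, mul_smul_comm]

lemma aeval_diagonal (d : Fin n → ℝ) (p : ℝ[X]) :
    Polynomial.aeval (Matrix.diagonal d) p = Matrix.diagonal (fun i => p.eval (d i)) := by
  induction p using Polynomial.induction_on' with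
  | add p q hp hq => simp [map_add, hp, hq, Matrix.diagonal_add]
  | monomial k a =>
      simp only [Polynomial.aeval_monomial, Polynomial.eval_monomial]
      rw [Matrix.diagonal_pow, Algebra.algebraMap_eq_smul_one, smul_mul_assoc, Matrix.one_mul,
        ← Matrix.diagonal_smul]
      have e : (a • d ^ k) = fun i => a * d i ^ k := by funext i; simp
      rw [e]

lemma matFun_eq_aeval {A : Matrix (Fin n) (Fin n) ℝ} (hA : A.IsHermitian) {f : ℝ → ℝ}
    (p : ℝ[X]) (hp : ∀ i, p.eval (hA.eigenvalues i) = f (hA.eigenvalues i)) :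
    matFun f A = Polynomial.aeval A p := by
  conv_rhs => rw [spectral' hA]
  rw [aeval_conj (mul_star_self_eigen hA) (star_mul_self_eigen hA), aeval_diagonal,
    matFun_def hA f]
  have e : (fun i => f (hA.eigenvalues i)) = fun i => p.eval (hA.eigenvalues i) := by
    funext i; exact (hp i).symm
  rw [e]

lemma det_conj' {Z W Wi : Matrix (Fin n) (Fin n) ℝ} (h1 : W * Wi = 1) :
    (W * Z * Wi).det = Z.det := by
  have h : W.det * Wi.det = 1 := by rw [← Matrix.det_mul, h1, Matrix.det_one]
  rw [Matrix.det_mul, Matrix.det_mul]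
  calc W.det * Z.det * Wi.det = Z.det * (W.det * Wi.det) := by ring
  _ = Z.det := by rw [h, mul_one]

lemma trace_conj' {Z W Wi : Matrix (Fin n) (Fin n) ℝ} (h2 : Wi * W = 1) :
    (W * Z * Wi).trace = Z.trace := by
  rw [Matrix.trace_mul_cycle, h2, Matrix.one_mul]

lemma conj_sub_smul {Z W Wi : Matrix (Fin n) (Fin n) ℝ} (h1 : W * Wi = 1) (μ : ℝ) :
    W * Z * Wi - μ • 1 = W * (Z - μ • 1) * Wi := by
  rw [Matrix.mul_sub, Matrix.sub_mul]
  congr 1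
  rw [Matrix.mul_smul, Matrix.smul_mul, Matrix.mul_one, h1]

lemma det_sub_smul_eig {M : Matrix (Fin n) (Fin n) ℝ} (hM : M.IsHermitian) (μ : ℝ) :
    (M - μ • 1).det = ∏ i, (hM.eigenvalues i - μ) := by
  conv_lhs => rw [spectral' hM, conj_sub_smul (mul_star_self_eigen hM) μ]
  rw [det_conj' (mul_star_self_eigen hM)]
  have : Matrix.diagonal (fun i => hM.eigenvalues i) - μ • (1 : Matrix (Fin n) (Fin n) ℝ)
      = Matrix.diagonal (fun i => hM.eigenvalues i - μ) := by
    rw [Matrix.smul_one_eq_diagonal, ← Matrix.diagonal_sub]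
  rw [this, Matrix.det_diagonal]

lemma eig_mem_of_conj {M W Wi : Matrix (Fin n) (Fin n) ℝ} {g : Fin n → ℝ}
    (hM : M.IsHermitian) (hMeq : M = W * Matrix.diagonal g * Wi)
    (h1 : W * Wi = 1) (i : Fin n) : ∃ j, hM.eigenvalues i = g j := by
  obtain ⟨μ, hμ⟩ : ∃ μ, hM.eigenvalues i = μ := ⟨_, rfl⟩
  have h0 : (W * Matrix.diagonal g * Wi - μ • 1).det = 0 := by
    rw [← hMeq, ← hμ, det_sub_smul_eig hM]
    exact Finset.prod_eq_zero (Finset.mem_univ i) (by ring)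
  rw [conj_sub_smul h1, det_conj' h1] at h0
  have e : Matrix.diagonal g - μ • (1 : Matrix (Fin n) (Fin n) ℝ)
      = Matrix.diagonal (fun j => g j - μ) := by
    rw [Matrix.smul_one_eq_diagonal, ← Matrix.diagonal_sub]
  rw [e, Matrix.det_diagonal] at h0
  rw [hμ]
  obtain ⟨j, _, hj⟩ := Finset.prod_eq_zero_iff.mp h0
  exact ⟨j, by linarith [sub_eq_zero.mp hj]⟩

lemma posDef_conj {Z W Wi : Matrix (Fin n) (Fin n) ℝ} (hZ : Z.PosDef) (h2 : Wi * W = 1) :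
    (Wᴴ * Z * W).PosDef := by
  refine Matrix.PosDef.of_dotProduct_mulVec_pos (Matrix.isHermitian_conjTranspose_mul_mul W hZ.1) fun x hx => ?_
  have hWx : W *ᵥ x ≠ 0 := by
    intro h
    apply hx
    have := congrArg (fun v => Wi *ᵥ v) h
    simpa [Matrix.mulVec_mulVec, h2] using this
  have := hZ.dotProduct_mulVec_pos hWx
  simpa only [star_mulVec, Matrix.dotProduct_mulVec, Matrix.vecMul_vecMul] using this

lemma cancel_left {E F : Matrix (Fin n) (Fin n) ℝ} (h : E * F = 1)
    (Z : Matrix (Fin n) (Fin n) ℝ) : E * (F * Z) = Z := by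
  rw [← Matrix.mul_assoc, h, Matrix.one_mul]

lemma inv_unique' {X Y Z : Matrix (Fin n) (Fin n) ℝ} (h1 : Y * X = 1) (h2 : X * Z = 1) :
    Y = Z := by
  calc Y = Y * (X * Z) := by rw [h2, Matrix.mul_one]
  _ = (Y * X) * Z := by rw [Matrix.mul_assoc]
  _ = Z := by rw [h1, Matrix.one_mul]

lemma sqrt_facts {A : Matrix (Fin n) (Fin n) ℝ} (hA : A.PosDef) :
    matSqrt A * matSqrt A = A ∧ matSqrt A * matSqrtInv A = 1 ∧ matSqrtInv A * matSqrt A = 1 ∧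
    (matSqrt A)ᵀ = matSqrt A ∧ (matSqrtInv A)ᵀ = matSqrtInv A := by
  have hAH : A.IsHermitian := hA.1
  have hpos := hA.eigenvalues_pos
  refine ⟨?_, ?_, ?_, matFun_transpose hAH _, matFun_transpose hAH _⟩
  · rw [matSqrt, matFun_mul hAH]
    exact matFun_eq_self hAH (fun i => Real.mul_self_sqrt (hpos i).le)
  · rw [matSqrt, matSqrtInv, matFun_mul hAH]
    exact matFun_eq_one hAH
      (fun i => mul_inv_cancel₀ (Real.sqrt_pos.mpr (hpos i)).ne')
  · rw [matSqrt, matSqrtInv, matFun_mul hAH]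
    exact matFun_eq_one hAH
      (fun i => inv_mul_cancel₀ (Real.sqrt_pos.mpr (hpos i)).ne')

lemma hsNorm_sq (T : Matrix (Fin n) (Fin n) ℝ) : hsNorm T ^ 2 = (Tᵀ * T).trace := by
  rw [hsNorm, Real.sq_sqrt]
  have : (Tᵀ * T).trace = ∑ i, ∑ j, (T j i) ^ 2 := by
    simp [Matrix.trace, Matrix.diag, Matrix.mul_apply, sq]
  rw [this]
  positivity

lemma tendsto_log_ratio (ν : ℝ) :
    Filter.Tendsto (fun ε : ℝ => Real.log (1 + ε * ν) / ε) (nhdsWithin 0 {(0:ℝ)}ᶜ) (nhds ν) := by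
  have h1 : HasDerivAt (fun t : ℝ => 1 + t * ν) ν 0 := by
    simpa using ((hasDerivAt_id (0:ℝ)).mul_const ν).const_add 1
  have h2 : HasDerivAt (fun t : ℝ => Real.log (1 + t * ν)) ν 0 := by
    have hlog := Real.hasDerivAt_log (x := 1 + 0 * ν) (by norm_num)
    have := hlog.comp 0 h1
    simpa [Function.comp_def] using this
  have := hasDerivAt_iff_tendsto_slope.mp h2
  refine this.congr (fun ε => ?_)
  simp [slope_def_field, div_eq_mul_inv]

lemma tendsto_log_sq (ν : ℝ) :
    Filter.Tendsto (fun ε : ℝ => (Real.log (1 + ε * ν))^2 / ε^2) (nhdsWithin 0 {(0:ℝ)}ᶜ)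
      (nhds (ν^2)) := by
  have := (tendsto_log_ratio ν).pow 2
  refine this.congr (fun ε => ?_)
  rw [div_pow]

end Aux

theorem stmt8 {n : ℕ} (A B : Matrix (Fin n) (Fin n) ℝ)
    (hA : A.PosDef) (hB : B.IsSymm) :
    Filter.Tendsto (fun ε : ℝ => (pdist (A + ε • B) A) ^ 2 / ε ^ 2)
      (nhdsWithin 0 {(0 : ℝ)}ᶜ)
      (nhds (((A⁻¹ * B) * (A⁻¹ * B)).trace)) := by
  classical
  obtain ⟨hSS, hSSi, hSiS, hSt, hSit⟩ := sqrt_facts hA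
  set S := matSqrt A with hSdef
  set Si := matSqrtInv A with hSidef
  have hAH : A.IsHermitian := hA.1
  have hAt : Aᵀ = A := by
    rw [← Matrix.conjTranspose_eq_transpose_of_trivial]; exact hAH
  set C := Si * B * Si with hCdef
  have hCt : Cᵀ = C := by
    rw [hCdef, Matrix.transpose_mul, Matrix.transpose_mul, hSit, hB, ← Matrix.mul_assoc]
  have hCH : C.IsHermitian := isHermitian_of_symm' hCt
  set U := (hCH.eigenvectorUnitary : Matrix (Fin n) (Fin n) ℝ) with hUdef
  set ν := hCH.eigenvalues with hνdef
  have hUs : U * star U = 1 := mul_star_self_eigen hCH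
  have hsU : star U * U = 1 := star_mul_self_eigen hCH
  have hCspec : C = U * Matrix.diagonal ν * star U := spectral' hCH
  set K := ∑ j, |ν j| with hKdef
  have hK0 : 0 ≤ K := Finset.sum_nonneg fun j _ => abs_nonneg _
  set δ := (1 + K)⁻¹ with hδdef
  have hδ : 0 < δ := by positivity
  have key : ∀ ε : ℝ, |ε| < δ →
      pdist (A + ε • B) A ^ 2 = ∑ j, Real.log (1 + ε * ν j) ^ 2 := by
    intro ε hε
    have hpos : ∀ j, 0 < 1 + ε * ν j := by
      intro j
      have h1 : |ν j| ≤ K := Finset.single_le_sum (fun j _ => abs_nonneg (ν j))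
        (Finset.mem_univ j)
      have h2 : |ε * ν j| < 1 := by
        rw [abs_mul]
        have hd : δ * (1 + K) = 1 := by
          rw [hδdef]; field_simp
        calc |ε| * |ν j| ≤ |ε| * (1 + K) := by nlinarith [abs_nonneg ε]
        _ < δ * (1 + K) := by nlinarith
        _ = 1 := hd
      have := (abs_lt.mp h2).1
      linarith
    set X := A + ε • B with hXdef
    have hXeq : X = S * (1 + ε • C) * S := by
      have e1 : S * (1 + ε • C) * S = S * S + ε • (S * (Si * (B * (Si * S)))) := by
        rw [hCdef]
        simp only [Matrix.mul_add, Matrix.add_mul, Matrix.mul_one, Matrix.one_mul,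
          Matrix.smul_mul, Matrix.mul_smul, Matrix.mul_assoc]
      rw [hXdef, e1, hSiS, Matrix.mul_one, cancel_left hSSi, hSS]
    have hdiag : (1 : Matrix (Fin n) (Fin n) ℝ) + ε • Matrix.diagonal ν
        = Matrix.diagonal (fun j => 1 + ε * ν j) := by
      rw [← Matrix.diagonal_one, ← Matrix.diagonal_smul, Matrix.diagonal_add]
      exact congrArg Matrix.diagonal (funext fun j => by simp)
    have hIC : (1 : Matrix (Fin n) (Fin n) ℝ) + ε • C
        = U * Matrix.diagonal (fun j => 1 + ε * ν j) * star U := by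
      have e : U * ((1 : Matrix (Fin n) (Fin n) ℝ) + ε • Matrix.diagonal ν) * star U
          = 1 + ε • (U * Matrix.diagonal ν * star U) := by
        rw [Matrix.mul_add, Matrix.add_mul, Matrix.mul_one, hUs, Matrix.mul_smul,
          Matrix.smul_mul]
      rw [← hdiag, e, ← hCspec]
    have hDpos : (Matrix.diagonal (fun j => 1 + ε * ν j)).PosDef := Matrix.PosDef.diagonal hpos
    have h1 : ((star U)ᴴ * Matrix.diagonal (fun j => 1 + ε * ν j) * (star U)).PosDef :=
      posDef_conj hDpos hUs
    have hsUH : (star U)ᴴ = U := by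
      rw [Matrix.star_eq_conjTranspose, Matrix.conjTranspose_conjTranspose]
    rw [hsUH, ← hIC] at h1
    have hXpd : X.PosDef := by
      have h2 : (Sᴴ * ((1 : Matrix (Fin n) (Fin n) ℝ) + ε • C) * S).PosDef :=
        posDef_conj h1 hSiS
      rw [show Sᴴ = S from by
        rw [Matrix.conjTranspose_eq_transpose_of_trivial, hSt]] at h2
      rwa [← hXeq] at h2
    obtain ⟨hQQ, hQP, hPQ, hQt, hPt⟩ := sqrt_facts hXpd
    set Q := matSqrt X with hQdef
    set P := matSqrtInv X with hPdef
    set g : Fin n → ℝ := fun j => (1 + ε * ν j)⁻¹ with hgdef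
    set T := U * Matrix.diagonal g * star U with hTdef
    have hgmul : Matrix.diagonal g * Matrix.diagonal (fun j => 1 + ε * ν j) = 1 := by
      rw [Matrix.diagonal_mul_diagonal, ← Matrix.diagonal_one]
      have e : (fun j => g j * (1 + ε * ν j)) = fun _ => (1:ℝ) :=
        funext fun j => inv_mul_cancel₀ (hpos j).ne'
      rw [show ((fun i => g i * (1 + ε * ν i)) : Fin n → ℝ) = fun _ => (1:ℝ) from e]
    have hmulg : Matrix.diagonal (fun j => 1 + ε * ν j) * Matrix.diagonal g = 1 := by
      rw [Matrix.diagonal_mul_diagonal, ← Matrix.diagonal_one]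
      have e : (fun j => (1 + ε * ν j) * g j) = fun _ => (1:ℝ) :=
        funext fun j => mul_inv_cancel₀ (hpos j).ne'
      rw [show ((fun i => (1 + ε * ν i) * g i) : Fin n → ℝ) = fun _ => (1:ℝ) from e]
    have hTIC : T * ((1 : Matrix (Fin n) (Fin n) ℝ) + ε • C) = 1 := by
      rw [hTdef, hIC]
      simp only [Matrix.mul_assoc]
      rw [cancel_left hsU, ← Matrix.mul_assoc (Matrix.diagonal g), hgmul, Matrix.one_mul, hUs]
    have hICT : ((1 : Matrix (Fin n) (Fin n) ℝ) + ε • C) * T = 1 := by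
      rw [hTdef, hIC]
      simp only [Matrix.mul_assoc]
      rw [cancel_left hsU, ← Matrix.mul_assoc (Matrix.diagonal (fun j => 1 + ε * ν j)), hmulg,
        Matrix.one_mul, hUs]
    have l1 : (P * P) * X = 1 := by
      rw [← hQQ]
      simp only [Matrix.mul_assoc]
      rw [cancel_left hPQ, hPQ]
    have l2 : X * (Si * (T * Si)) = 1 := by
      rw [hXeq]
      simp only [Matrix.mul_assoc]
      rw [cancel_left hSSi, ← Matrix.mul_assoc ((1 : Matrix (Fin n) (Fin n) ℝ) + ε • C), hICT,
        Matrix.one_mul, hSSi]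
    have hPP : P * P = Si * (T * Si) := inv_unique' l1 l2
    have hPPz : ∀ Z : Matrix (Fin n) (Fin n) ℝ, P * (P * Z) = Si * (T * (Si * Z)) := by
      intro Z
      calc P * (P * Z) = (P * P) * Z := by rw [Matrix.mul_assoc]
      _ = Si * (T * (Si * Z)) := by rw [hPP]; simp only [Matrix.mul_assoc]
    have hAz : ∀ Z : Matrix (Fin n) (Fin n) ℝ, A * Z = S * (S * Z) := by
      intro Z
      rw [← Matrix.mul_assoc, hSS]
    have hTz : ∀ Z : Matrix (Fin n) (Fin n) ℝ,
        T * Z = U * (Matrix.diagonal g * (star U * Z)) := by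
      intro Z
      rw [hTdef]; simp only [Matrix.mul_assoc]
    set W := P * (S * U) with hWdef
    set Wi := star U * (Si * Q) with hWidef
    have hWWi : W * Wi = 1 := by
      rw [hWdef, hWidef]
      simp only [Matrix.mul_assoc]
      rw [cancel_left hUs, cancel_left hSSi, hPQ]
    have hWiW : Wi * W = 1 := by
      rw [hWdef, hWidef]
      simp only [Matrix.mul_assoc]
      rw [cancel_left hQP, cancel_left hSiS, hsU]
    set M := P * A * P with hMdef
    have hWiMW : Wi * (M * W) = Matrix.diagonal g := by
      rw [hMdef, hWdef, hWidef]
      simp only [Matrix.mul_assoc]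
      rw [hPPz, cancel_left hSiS, hAz, cancel_left hSSi, cancel_left hQP, cancel_left hSiS,
        hTz, hsU, Matrix.mul_one, cancel_left hsU]
    have hMeq : M = W * Matrix.diagonal g * Wi := by
      have e : W * (Wi * (M * W)) * Wi = M := by
        simp only [Matrix.mul_assoc]
        rw [cancel_left hWWi, hWWi, Matrix.mul_one]
      conv_lhs => rw [← e]
      rw [hWiMW]
    have hMt : Mᵀ = M := by
      rw [hMdef, Matrix.transpose_mul, Matrix.transpose_mul, hPt, hAt, ← Matrix.mul_assoc]
    have hMH : M.IsHermitian := isHermitian_of_symm' hMt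
    have heig : ∀ i, ∃ j, hMH.eigenvalues i = g j := fun i => eig_mem_of_conj hMH hMeq hWWi i
    set sn : Finset ℝ := Finset.image g Finset.univ with hsndef
    set p : Polynomial ℝ := Lagrange.interpolate sn id Real.log with hpdef
    have hps : ∀ x ∈ sn, p.eval x = Real.log x := by
      intro x hx
      have := Lagrange.eval_interpolate_at_node (v := id) (r := Real.log) (s := sn)
        (Set.injOn_id _) hx
      rw [hpdef]; simpa using this
    have hplog : matLog M = Polynomial.aeval M p := by
      apply matFun_eq_aeval hMH
      intro i
      obtain ⟨j, hj⟩ := heig i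
      rw [hj]
      exact hps (g j) (Finset.mem_image_of_mem g (Finset.mem_univ j))
    have hLW : matLog M = W * Matrix.diagonal (fun j => Real.log (g j)) * Wi := by
      rw [hplog, hMeq, aeval_conj hWWi hWiW, aeval_diagonal]
      have e : (fun i => p.eval (g i)) = fun j => Real.log (g j) := by
        funext j
        exact hps (g j) (Finset.mem_image_of_mem g (Finset.mem_univ j))
      rw [e]
    have hLt : (matLog M)ᵀ = matLog M := matFun_transpose hMH Real.log
    have hpd : pdist X A = hsNorm (matLog M) := rfl
    have hsq : pdist X A ^ 2 = ((matLog M) * (matLog M)).trace := by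
      rw [hpd, hsNorm_sq, hLt]
    have htrace : ((matLog M) * (matLog M)).trace = ∑ j, Real.log (1 + ε * ν j) ^ 2 := by
      rw [hLW]
      have e2 : (W * Matrix.diagonal (fun j => Real.log (g j)) * Wi) *
          (W * Matrix.diagonal (fun j => Real.log (g j)) * Wi)
          = W * (Matrix.diagonal (fun j => Real.log (g j)) *
              Matrix.diagonal (fun j => Real.log (g j))) * Wi := by
        have e3 := conj_pow' (N := Matrix.diagonal (fun j => Real.log (g j))) hWWi hWiW 2
        rw [pow_two, pow_two] at e3
        exact e3
      rw [e2, Matrix.diagonal_mul_diagonal, trace_conj' hWiW, Matrix.trace_diagonal]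
      refine Finset.sum_congr rfl fun j _ => ?_
      have e4 : Real.log (g j) = - Real.log (1 + ε * ν j) := by
        rw [hgdef]; exact Real.log_inv _
      simp only [Pi.mul_apply, e4]
      ring
    rw [hsq, htrace]
  have hAinv : A⁻¹ = Si * Si := by
    apply Matrix.inv_eq_left_inv
    calc (Si * Si) * A = Si * (Si * (S * S)) := by rw [← hSS]; simp only [Matrix.mul_assoc]
    _ = 1 := by rw [cancel_left hSiS, hSiS]
  have htr : ((A⁻¹ * B) * (A⁻¹ * B)).trace = ∑ j, ν j ^ 2 := by
    have e1 : (A⁻¹ * B) * (A⁻¹ * B) = Si * ((Si * B * Si) * (Si * B)) := by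
      rw [hAinv]; simp only [Matrix.mul_assoc]
    have e2 : C * C = ((Si * B * Si) * (Si * B)) * Si := by
      rw [hCdef]; simp only [Matrix.mul_assoc]
    rw [e1, Matrix.trace_mul_comm, ← e2]
    have e3 : C * C = U * (Matrix.diagonal ν * Matrix.diagonal ν) * star U := by
      have e5 := conj_pow' (N := Matrix.diagonal ν) hUs hsU 2
      rw [pow_two, pow_two] at e5
      rw [hCspec]
      exact e5
    rw [e3, trace_conj' hsU, Matrix.diagonal_mul_diagonal, Matrix.trace_diagonal]
    refine Finset.sum_congr rfl fun j _ => ?_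
    simp [sq]
  rw [htr]
  have hlim := tendsto_finset_sum (Finset.univ : Finset (Fin n))
    (fun j (_ : j ∈ Finset.univ) => tendsto_log_sq (ν j))
  refine hlim.congr' ?_
  have hev : ∀ᶠ ε : ℝ in nhds 0, |ε| < δ := by
    have := eventually_abs_sub_lt (0:ℝ) hδ
    simpa using this
  filter_upwards [hev.filter_mono nhdsWithin_le_nhds] with ε hε
  rw [key ε hε, Finset.sum_div]
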